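/- Let W be the group of signed permutations of {1,...,n} acting on R^n, and let sgn₀(w) denote the sign of the underlying (unsigned) permutation of w. For ρ = (1/2, 3/2, ..., (2n-1)/2) ∈ R^n and any μ ∈ R^n with distinct values μ_1² < μ_2² < ... among the squares, one has: lim_{t→0} [Σ_{w∈W} sgn₀(w) e^{t⟨w(μ), ρ⟩}] / [Σ_{w∈W} sgn₀(w) e^{t⟨w(ρ), ρ⟩}] = Π_{1≤l<m≤n} (μ_m² - μ_l²)/(ρ_m² - ρ_l²), where ⟨·,·⟩ is the standard inner product. -/

import Mathlib

open Filter

open Finset Nat Matrix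

noncomputable def rrTail (k : ℕ) (x : ℝ) : ℝ := ∑' i : ℕ, x ^ (2 * i) / (2 * (i + k))!

lemma fact_le_cast {a b : ℕ} (h : a ≤ b) : (a ! : ℝ) ≤ (b ! : ℝ) :=
  Nat.cast_le.2 (Nat.factorial_le h)

lemma fact_pos_cast (a : ℕ) : (0 : ℝ) < (a ! : ℝ) := Nat.cast_pos.2 (Nat.factorial_pos a)

lemma rr_summable (k : ℕ) (x : ℝ) : Summable (fun i : ℕ => x ^ (2 * i) / (2 * (i + k))!) := by
  refine (Real.summable_pow_div_factorial (x ^ 2)).of_nonneg_of_le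
    (fun i => ?_) (fun i => ?_)
  · have := fact_pos_cast (2 * (i + k))
    rw [pow_mul]
    positivity
  · rw [pow_mul]
    exact div_le_div_of_nonneg_left (by positivity) (fact_pos_cast _) (fact_le_cast (by omega))

lemma rr_eq (k : ℕ) (x : ℝ) : rrTail k x = 1 / (2 * k)! + x ^ 2 * rrTail (k + 1) x := by
  have hs := rr_summable k x
  rw [rrTail, Summable.tsum_eq_zero_add hs]
  congr 1
  · simp
  · rw [rrTail, ← tsum_mul_left]
    congr 1 with i
    have h1 : 2 * (i + 1) = 2 * i + 2 := by ring
    have h2 : i + 1 + k = i + (k + 1) := by ring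
    rw [h1, h2, pow_add]
    ring

lemma rr_zero (k : ℕ) : rrTail k 0 = 1 / (2 * k)! := by
  rw [rr_eq]; simp

lemma rr_nonneg (k : ℕ) (x : ℝ) : 0 ≤ rrTail k x :=
  tsum_nonneg fun i => by
    have := fact_pos_cast (2 * (i + k))
    rw [pow_mul]; positivity

lemma rr_le_cosh (k : ℕ) (x : ℝ) : rrTail k x ≤ Real.cosh x := by
  rw [Real.cosh_eq_tsum]
  refine Summable.tsum_le_tsum (fun i => ?_) (rr_summable k x) x.hasSum_cosh.summable
  rw [pow_mul]
  exact div_le_div_of_nonneg_left (by positivity) (fact_pos_cast _) (fact_le_cast (by omega))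

lemma rr_continuousAt (k : ℕ) : ContinuousAt (rrTail k) 0 := by
  rw [ContinuousAt, ← tendsto_sub_nhds_zero_iff]
  refine squeeze_zero_norm (a := fun x : ℝ => x ^ 2 * Real.cosh x) ?_ ?_
  · intro x
    rw [rr_eq, rr_zero]
    simp only [add_sub_cancel_left]
    rw [Real.norm_eq_abs, abs_mul, abs_pow, sq_abs, abs_of_nonneg (rr_nonneg (k + 1) x)]
    have h2 := rr_le_cosh (k + 1) x
    nlinarith [sq_nonneg x]
  · have h : Continuous fun x : ℝ => x ^ 2 * Real.cosh x := by continuity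
    simpa using h.tendsto 0

lemma cosh_decomp (k : ℕ) (x : ℝ) :
    Real.cosh x = (∑ i ∈ range k, x ^ (2 * i) / (2 * i)!) + x ^ (2 * k) * rrTail k x := by
  have hs : Summable (fun i : ℕ => x ^ (2 * i) / (2 * i)!) := by
    simpa using rr_summable 0 x
  rw [Real.cosh_eq_tsum, ← Summable.sum_add_tsum_nat_add k hs]
  congr 1
  rw [rrTail, ← tsum_mul_left]
  congr 1 with i
  rw [Nat.mul_add 2 i k, pow_add]
  ring

lemma sumset_lower (T : Finset ℕ) : T.card * (T.card - 1) ≤ 2 * ∑ t ∈ T, t := by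
  induction T using Finset.strongInduction with
  | _ T ih =>
    rcases T.eq_empty_or_nonempty with rfl | hne
    · simp
    · have hM : T.max' hne ∈ T := T.max'_mem hne
      set M := T.max' hne with hMdef
      have hsub : T.erase M ⊂ T := Finset.erase_ssubset hM
      have hrec := ih _ hsub
      have hcardM : T.card ≤ M + 1 := by
        have : T ⊆ Finset.range (M + 1) := fun x hx =>
          Finset.mem_range.2 (Nat.lt_succ_of_le (T.le_max' x hx))
        simpa using Finset.card_le_card this
      have hsum : ∑ t ∈ T.erase M, t + M = ∑ t ∈ T, t := Finset.sum_erase_add T _ hM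
      have hcard : (T.erase M).card = T.card - 1 := Finset.card_erase_of_mem hM
      rw [hcard] at hrec
      rcases Nat.eq_zero_or_pos T.card with h0 | hpos
      · simp [h0]
      · obtain ⟨c, hc⟩ : ∃ c, T.card = c + 1 := ⟨T.card - 1, by omega⟩
        rw [hc] at hrec hcardM ⊢
        simp only [Nat.add_sub_cancel] at hrec ⊢
        rcases Nat.eq_zero_or_pos c with h0 | hcpos
        · subst h0; simp
        · obtain ⟨d, hd⟩ : ∃ d, c = d + 1 := ⟨c - 1, by omega⟩
          rw [hd] at hrec hcardM ⊢
          simp only [Nat.add_sub_cancel] at hrec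
          nlinarith

lemma arith_aux (m s u B : ℕ) (hs : 2 ≤ s) (hsu : s + u = m + 1)
    (hlow : u * (u - 1) ≤ 2 * B) : (m + 1) * m < 2 * (s * m + B) := by
  rcases Nat.eq_zero_or_pos u with hu0 | hup
  · have hsm : s = m + 1 := by omega
    subst hsm
    nlinarith
  · obtain ⟨w, hw⟩ : ∃ w, u = w + 1 := ⟨u - 1, by omega⟩
    subst hw
    have hm : m = s + w := by omega
    subst hm
    simp only [Nat.add_sub_cancel] at hlow
    nlinarith

lemma count_lemma {m : ℕ} (c : Fin (m + 1) → Fin (m + 1))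
    (h : ∀ j j', j ≠ j' → c j = c j' → (c j : ℕ) = m)
    (hni : ¬ Function.Injective c) :
    (m + 1) * m < 2 * ∑ j, (c j : ℕ) := by
  classical
  set S : Finset (Fin (m + 1)) := Finset.univ.filter (fun j => (c j : ℕ) = m) with hS
  have hinj : Set.InjOn (fun j => (c j : ℕ)) (Sᶜ : Finset (Fin (m+1))) := by
    intro a ha b hb hab
    by_contra hne
    have : c a = c b := Fin.ext hab
    have := h a b hne this
    simp [hS, Finset.mem_compl, Finset.mem_filter] at ha
    exact ha this
  -- split sum
  have hsplit : ∑ j, (c j : ℕ) = S.card * m + ∑ j ∈ Sᶜ, (c j : ℕ) := by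
    rw [← Finset.sum_add_sum_compl S]
    congr 1
    have hall : ∀ j ∈ S, (c j : ℕ) = m := fun j hj => (Finset.mem_filter.1 hj).2
    rw [Finset.sum_congr rfl hall, Finset.sum_const, smul_eq_mul, mul_comm]
  -- lower bound on complement sum via image
  have himg : ∑ j ∈ Sᶜ, (c j : ℕ) = ∑ t ∈ (Sᶜ).image (fun j => (c j : ℕ)), t := by
    rw [Finset.sum_image (fun a ha b hb hab => hinj ha hb hab)]
  have hcardimg : ((Sᶜ).image (fun j => (c j : ℕ))).card = (Sᶜ).card :=
    Finset.card_image_of_injOn hinj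
  have hlow : (Sᶜ).card * ((Sᶜ).card - 1) ≤ 2 * ∑ j ∈ Sᶜ, (c j : ℕ) := by
    rw [himg, ← hcardimg]
    exact sumset_lower _
  -- S has at least 2 elements
  obtain ⟨a, b, hab, hcab⟩ : ∃ a b, a ≠ b ∧ c a = c b := by
    rw [Function.Injective] at hni
    push_neg at hni
    obtain ⟨a, b, h1, h2⟩ := hni
    exact ⟨a, b, h2, h1⟩
  have haS : a ∈ S := by simp [hS, h a b hab hcab]
  have hbS : b ∈ S := by
    have hcb : (c b : ℕ) = m := by rw [← hcab]; exact h a b hab hcab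
    simp [hS, hcb]
  have hScard : 2 ≤ S.card := Finset.one_lt_card.2 ⟨a, haS, b, hbS, hab⟩
  have hcards : S.card + (Sᶜ).card = m + 1 := by
    rw [Finset.card_add_card_compl]
    simp
  rw [hsplit]
  exact arith_aux m S.card (Sᶜ).card _ hScard hcards hlow

noncomputable def ucol (m : ℕ) (ρ μ : Fin (m + 1) → ℝ) (t : ℝ) (j : Fin (m + 1)) (k : ℕ) :
    Fin (m + 1) → ℝ :=
  if k < m then (fun i => ρ i ^ (2 * k) / (2 * k)!)
  else fun i => ρ i ^ (2 * m) * rrTail m (t * μ j * ρ i)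

lemma ucol_zero (m : ℕ) (ρ μ : Fin (m + 1) → ℝ) (j : Fin (m + 1)) {k : ℕ} (hk : k ≤ m) :
    ucol m ρ μ 0 j k = fun i => ρ i ^ (2 * k) / (2 * k)! := by
  rcases lt_or_eq_of_le hk with h | h
  · rw [ucol, if_pos h]
  · subst h
    rw [ucol, if_neg (lt_irrefl k)]
    funext i
    rw [zero_mul, zero_mul, rr_zero, mul_one_div]

noncomputable def Gfun (m : ℕ) (ρ μ : Fin (m + 1) → ℝ) (t : ℝ) : ℝ :=
  ∑ c ∈ Finset.univ.filter
      (fun c : Fin (m + 1) → Fin (m + 1) => (m + 1) * m ≤ 2 * ∑ j, (c j : ℕ)),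
    t ^ (2 * ∑ j, (c j : ℕ) - (m + 1) * m) *
      ((∏ j, μ j ^ (2 * (c j : ℕ))) *
        Matrix.detRowAlternating (fun j => ucol m ρ μ t j (c j)))

lemma sum_bij_eq (m : ℕ) {c : Fin (m + 1) → Fin (m + 1)} (hc : Function.Bijective c) :
    2 * ∑ j, (c j : ℕ) = (m + 1) * m := by
  have h1 : ∑ j, (c j : ℕ) = ∑ k : Fin (m + 1), (k : ℕ) :=
    Fintype.sum_bijective c hc _ _ (fun x => rfl)
  rw [h1, Fin.sum_univ_eq_sum_range (fun i => i) (m + 1), mul_comm,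
    Finset.sum_range_id_mul_two (m + 1)]
  simp

lemma Fdet_eq (m : ℕ) (ρ μ : Fin (m + 1) → ℝ) (t : ℝ) :
    (Matrix.of fun j i => Real.cosh (t * μ j * ρ i)).det
      = t ^ ((m + 1) * m) * Gfun m ρ μ t := by
  classical
  have hrow : (fun j i => Real.cosh (t * μ j * ρ i))
      = fun j => ∑ k : Fin (m + 1), (t ^ (2 * (k : ℕ)) * μ j ^ (2 * (k : ℕ))) • ucol m ρ μ t j k := by
    funext j i
    have hd := cosh_decomp m (t * μ j * ρ i)
    rw [Finset.sum_apply, Fin.sum_univ_eq_sum_range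
      (fun k => ((t ^ (2 * k) * μ j ^ (2 * k)) • ucol m ρ μ t j k) i) (m + 1),
      Finset.sum_range_succ]
    rw [hd]
    congr 1
    · apply Finset.sum_congr rfl
      intro k hk
      have hkm : k < m := Finset.mem_range.1 hk
      simp only [Pi.smul_apply, smul_eq_mul, ucol, if_pos hkm]
      rw [mul_pow, mul_pow]
      ring
    · simp only [Pi.smul_apply, smul_eq_mul, ucol, if_neg (lt_irrefl m)]
      rw [mul_pow, mul_pow]
      ring
  have hdet : (Matrix.of fun j i => Real.cosh (t * μ j * ρ i)).det
      = Matrix.detRowAlternating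
          (fun j => ∑ k : Fin (m + 1), (t ^ (2 * (k : ℕ)) * μ j ^ (2 * (k : ℕ))) • ucol m ρ μ t j k) := by
    rw [← hrow]; rfl
  rw [hdet]
  have hcoe : ∀ v : Fin (m + 1) → (Fin (m + 1) → ℝ),
      Matrix.detRowAlternating (R := ℝ) v
        = (Matrix.detRowAlternating (R := ℝ) (n := Fin (m + 1))).toMultilinearMap v :=
    fun _ => rfl
  rw [hcoe, (Matrix.detRowAlternating (R := ℝ) (n := Fin (m + 1))).toMultilinearMap.map_sum]
  -- now a sum over c : Fin (m+1) → Fin (m+1)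
  have hterm : ∀ c : Fin (m + 1) → Fin (m + 1),
      (Matrix.detRowAlternating (R := ℝ) (n := Fin (m + 1))).toMultilinearMap
          (fun j => (t ^ (2 * ((c j) : ℕ)) * μ j ^ (2 * ((c j) : ℕ))) • ucol m ρ μ t j (c j))
        = t ^ (2 * ∑ j, (c j : ℕ)) * ((∏ j, μ j ^ (2 * ((c j) : ℕ))) *
            Matrix.detRowAlternating (fun j => ucol m ρ μ t j (c j))) := by
    intro c
    rw [MultilinearMap.map_smul_univ]
    rw [smul_eq_mul, Finset.prod_mul_distrib]
    have : ∏ j, t ^ (2 * ((c j) : ℕ)) = t ^ (2 * ∑ j, (c j : ℕ)) := by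
      rw [Finset.prod_pow_eq_pow_sum, Finset.mul_sum]
    rw [this, ← hcoe]
    ring
  rw [Finset.sum_congr rfl (fun c _ => hterm c)]
  -- split the sum
  rw [← Finset.sum_filter_add_sum_filter_not Finset.univ
    (fun c : Fin (m + 1) → Fin (m + 1) => (m + 1) * m ≤ 2 * ∑ j, (c j : ℕ))]
  have hzero : ∑ c ∈ Finset.univ.filter
      (fun c : Fin (m + 1) → Fin (m + 1) => ¬ ((m + 1) * m ≤ 2 * ∑ j, (c j : ℕ))),
      t ^ (2 * ∑ j, (c j : ℕ)) * ((∏ j, μ j ^ (2 * ((c j) : ℕ))) *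
        Matrix.detRowAlternating (fun j => ucol m ρ μ t j (c j))) = 0 := by
    apply Finset.sum_eq_zero
    intro c hc
    rw [Finset.mem_filter] at hc
    have hlt : 2 * ∑ j, (c j : ℕ) < (m + 1) * m := by omega
    -- show the det vanishes
    have hD : Matrix.detRowAlternating (fun j => ucol m ρ μ t j (c j)) = 0 := by
      by_cases hcol : ∃ j j', j ≠ j' ∧ c j = c j' ∧ ((c j) : ℕ) < m
      · obtain ⟨j, j', hne, hcc, hlow⟩ := hcol
        apply AlternatingMap.map_eq_zero_of_eq _ _ _ hne
        rw [ucol, ucol, if_pos hlow, hcc, if_pos (hcc ▸ hlow)]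
      · push_neg at hcol
        have hprop : ∀ j j', j ≠ j' → c j = c j' → ((c j) : ℕ) = m := by
          intro j j' hne hcc
          have h1 := hcol j j' hne hcc
          have h2 : ((c j) : ℕ) < m + 1 := (c j).isLt
          omega
        by_cases hinj : Function.Injective c
        · have hbij : Function.Bijective c := Finite.injective_iff_bijective.1 hinj
          rw [sum_bij_eq m hbij] at hlt
          omega
        · have := count_lemma c hprop hinj
          omega
    rw [hD]
    ring
  rw [hzero, add_zero, Gfun, Finset.mul_sum]
  apply Finset.sum_congr rfl
  intro c hc
  rw [Finset.mem_filter] at hc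
  have he : 2 * ∑ j, (c j : ℕ) = (m + 1) * m + (2 * ∑ j, (c j : ℕ) - (m + 1) * m) := by omega
  conv_lhs => rw [he, pow_add]
  ring

lemma Gfun_continuousAt (m : ℕ) (ρ μ : Fin (m + 1) → ℝ) : ContinuousAt (Gfun m ρ μ) 0 := by
  classical
  unfold Gfun ContinuousAt
  apply tendsto_finset_sum
  intro c hc
  apply ContinuousAt.mul
  · exact (continuous_pow _).continuousAt
  · apply ContinuousAt.mul continuousAt_const
    have hM : ContinuousAt (fun t : ℝ => Matrix.of fun j i => ucol m ρ μ t j (c j) i) 0 := by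
      apply continuousAt_pi.2
      intro j
      apply continuousAt_pi.2
      intro i
      by_cases h : ((c j) : ℕ) < m
      · simp only [ucol, if_pos h, Matrix.of_apply]
        exact continuousAt_const
      · simp only [ucol, if_neg h, Matrix.of_apply]
        apply ContinuousAt.mul continuousAt_const
        have hg : ContinuousAt (fun t : ℝ => t * μ j * ρ i) 0 :=
          ((continuous_id.mul continuous_const).mul continuous_const).continuousAt
        have hf : ContinuousAt (rrTail m) ((fun t : ℝ => t * μ j * ρ i) 0) := by
          simpa using rr_continuousAt m
        exact ContinuousAt.comp (f := fun t : ℝ => t * μ j * ρ i) hf hg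
    exact (continuous_id.matrix_det.continuousAt).comp hM

lemma Gfun_zero (m : ℕ) (ρ μ : Fin (m + 1) → ℝ) :
    Gfun m ρ μ 0
      = (Matrix.of fun k j : Fin (m + 1) => μ j ^ (2 * (k : ℕ))).det *
          (Matrix.of fun k i : Fin (m + 1) => ρ i ^ (2 * (k : ℕ)) / (2 * (k : ℕ))!).det := by
  classical
  set W : Fin (m + 1) → Fin (m + 1) → ℝ :=
    fun k i => ρ i ^ (2 * (k : ℕ)) / (2 * (k : ℕ))! with hW
  have hrow0 : ∀ (c : Fin (m + 1) → Fin (m + 1)) (j : Fin (m + 1)),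
      ucol m ρ μ 0 j (c j) = W (c j) := by
    intro c j
    rw [ucol_zero m ρ μ j (Nat.lt_succ_iff.1 (c j).isLt)]
  have hsub : Finset.univ.filter (fun c : Fin (m + 1) → Fin (m + 1) => Function.Bijective c)
      ⊆ Finset.univ.filter
        (fun c : Fin (m + 1) → Fin (m + 1) => (m + 1) * m ≤ 2 * ∑ j, (c j : ℕ)) := by
    intro c hcm
    rw [Finset.mem_filter] at hcm ⊢
    exact ⟨Finset.mem_univ c, le_of_eq (sum_bij_eq m hcm.2).symm⟩
  have hz : ∀ c ∈ Finset.univ.filter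
      (fun c : Fin (m + 1) → Fin (m + 1) => (m + 1) * m ≤ 2 * ∑ j, (c j : ℕ)),
      c ∉ Finset.univ.filter (fun c : Fin (m + 1) → Fin (m + 1) => Function.Bijective c) →
      (0 : ℝ) ^ (2 * ∑ j, (c j : ℕ) - (m + 1) * m) *
        ((∏ j, μ j ^ (2 * ((c j) : ℕ))) *
          Matrix.detRowAlternating (fun j => ucol m ρ μ 0 j (c j))) = 0 := by
    intro c _ hcnb
    rw [Finset.mem_filter] at hcnb
    push_neg at hcnb
    have hni : ¬ Function.Injective c := by
      intro hinj
      exact hcnb (Finset.mem_univ c) (Finite.injective_iff_bijective.1 hinj)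
    rw [Function.Injective] at hni
    push_neg at hni
    obtain ⟨a, b, hab, hne⟩ := hni
    have hD : Matrix.detRowAlternating (fun j => ucol m ρ μ 0 j (c j)) = 0 := by
      apply AlternatingMap.map_eq_zero_of_eq _ _ _ hne
      rw [hrow0 c a, hrow0 c b, hab]
    rw [hD]
    ring
  rw [Gfun, ← Finset.sum_subset hsub hz]
  have hperm : ∀ σ : Equiv.Perm (Fin (m + 1)),
      (0 : ℝ) ^ (2 * ∑ j, ((σ j : ℕ)) - (m + 1) * m) *
        ((∏ j, μ j ^ (2 * ((σ j) : ℕ))) *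
          Matrix.detRowAlternating (fun j => ucol m ρ μ 0 j (σ j)))
      = (((Equiv.Perm.sign σ : ℤ) : ℝ) * ∏ j, μ j ^ (2 * ((σ j) : ℕ))) *
          Matrix.detRowAlternating W := by
    intro σ
    have he : 2 * ∑ j, ((σ j : ℕ)) - (m + 1) * m = 0 := by
      rw [sum_bij_eq m σ.bijective]
      omega
    rw [he, pow_zero, one_mul]
    have hrows : (fun j => ucol m ρ μ 0 j (σ j)) = W ∘ σ := by
      funext j
      exact hrow0 (⇑σ) j
    rw [hrows, AlternatingMap.map_perm]
    rw [Units.smul_def, zsmul_eq_mul]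
    ring
  have hbij : ∑ c ∈ Finset.univ.filter
      (fun c : Fin (m + 1) → Fin (m + 1) => Function.Bijective c),
      (0 : ℝ) ^ (2 * ∑ j, (c j : ℕ) - (m + 1) * m) *
        ((∏ j, μ j ^ (2 * ((c j) : ℕ))) *
          Matrix.detRowAlternating (fun j => ucol m ρ μ 0 j (c j)))
      = ∑ σ : Equiv.Perm (Fin (m + 1)),
          (((Equiv.Perm.sign σ : ℤ) : ℝ) * ∏ j, μ j ^ (2 * ((σ j) : ℕ))) *
            Matrix.detRowAlternating W := by
    rw [← Finset.sum_congr rfl (fun σ (_ : σ ∈ (Finset.univ : Finset (Equiv.Perm (Fin (m + 1))))) => hperm σ)]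
    refine Finset.sum_bij'
      (i := fun c hc => Equiv.ofBijective c (Finset.mem_filter.1 hc).2)
      (j := fun σ _ => ⇑σ) ?_ ?_ ?_ ?_ ?_
    · intro c hc
      exact Finset.mem_univ _
    · intro σ _
      exact Finset.mem_filter.2 ⟨Finset.mem_univ _, σ.bijective⟩
    · intro c hc
      rfl
    · intro σ _
      exact Equiv.ext fun x => rfl
    · intro c hc
      rfl
  rw [hbij, ← Finset.sum_mul]
  congr 1
  rw [Matrix.det_apply']
  exact Finset.sum_congr rfl fun σ _ => by simp [Matrix.of_apply]

/-- The alternating Weyl sum `Σ_{w ∈ W} sgn₀(w) e^{t⟨w(μ), ρW⟩}` over the group `W` of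
signed permutations of `{1,…,n}`, where `sgn₀(w)` is the sign of the underlying (unsigned)
permutation; parametrizing `w` by a pair `(σ, ε)` of a permutation and a sign flip, the
pairing is `⟨w(μ), ρW⟩ = Σ_j ε_j μ_j ρW_{σ(j)}`. -/
noncomputable def signedWeylSum (n : ℕ) (ρW : Fin n → ℝ) (μ : Fin n → ℝ) (t : ℝ) : ℝ :=
  ∑ σ : Equiv.Perm (Fin n), ∑ ε : Fin n → Bool,
    ((Equiv.Perm.sign σ : ℤ) : ℝ) *
      Real.exp (t * ∑ j, (if ε j then -1 else 1) * μ j * ρW (σ j))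


lemma swsum_eq (n : ℕ) (ρ μ : Fin n → ℝ) (t : ℝ) :
    signedWeylSum n ρ μ t = 2 ^ n * (Matrix.of fun i j => Real.cosh (t * μ j * ρ i)).det := by
  classical
  rw [signedWeylSum, Matrix.det_apply', Finset.mul_sum]
  apply Finset.sum_congr rfl
  intro σ _
  rw [← Finset.mul_sum]
  have h2 : ∑ ε : Fin n → Bool,
      Real.exp (t * ∑ j, (if ε j then (-1 : ℝ) else 1) * μ j * ρ (σ j))
      = ∏ j, (2 * Real.cosh (t * (μ j * ρ (σ j)))) := by
    have h1 : ∀ ε : Fin n → Bool,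
        Real.exp (t * ∑ j, (if ε j then (-1 : ℝ) else 1) * μ j * ρ (σ j))
          = ∏ j, Real.exp (t * ((if ε j then (-1 : ℝ) else 1) * μ j * ρ (σ j))) := by
      intro ε
      rw [Finset.mul_sum, Real.exp_sum]
    rw [Finset.sum_congr rfl (fun ε _ => h1 ε),
      ← Fintype.prod_sum (f := fun (j : Fin n) (b : Bool) =>
        Real.exp (t * ((if b then (-1 : ℝ) else 1) * μ j * ρ (σ j))))]
    apply Finset.prod_congr rfl
    intro j _
    rw [Fintype.sum_bool]
    have hx : t * ((-1 : ℝ) * μ j * ρ (σ j)) = -(t * (μ j * ρ (σ j))) := by ring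
    have hy : t * ((1 : ℝ) * μ j * ρ (σ j)) = t * (μ j * ρ (σ j)) := by ring
    simp only [if_true, if_false, Bool.false_eq_true]
    rw [hx, hy, Real.cosh_eq]
    ring
  rw [h2, Finset.prod_mul_distrib, Finset.prod_const, Finset.card_univ, Fintype.card_fin]
  rw [← mul_assoc, mul_comm (((Equiv.Perm.sign σ : ℤ) : ℝ)) ((2:ℝ) ^ n), mul_assoc]
  congr 1
  congr 1
  apply Finset.prod_congr rfl
  intro j _
  rw [Matrix.of_apply]
  ring_nf

lemma detA_eq (m : ℕ) (μ : Fin (m + 1) → ℝ) :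
    (Matrix.of fun k j : Fin (m + 1) => μ j ^ (2 * (k : ℕ))).det
      = ∏ i, ∏ j ∈ Finset.Ioi i, (μ j ^ 2 - μ i ^ 2) := by
  have h : (Matrix.of fun k j : Fin (m + 1) => μ j ^ (2 * (k : ℕ)))
      = (Matrix.vandermonde fun i => μ i ^ 2)ᵀ := by
    apply Matrix.ext
    intro k j
    simp [Matrix.vandermonde, pow_mul]
  rw [h, Matrix.det_transpose, Matrix.det_vandermonde]

lemma detW_eq (m : ℕ) (ρ : Fin (m + 1) → ℝ) :
    (Matrix.of fun k i : Fin (m + 1) => ρ i ^ (2 * (k : ℕ)) / (2 * (k : ℕ))!).det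
      = (∏ k : Fin (m + 1), (1 / ((2 * (k : ℕ))! : ℝ))) *
          ∏ i, ∏ j ∈ Finset.Ioi i, (ρ j ^ 2 - ρ i ^ 2) := by
  have h : (Matrix.of fun k i : Fin (m + 1) => ρ i ^ (2 * (k : ℕ)) / (2 * (k : ℕ))!)ᵀ
      = Matrix.of fun i k : Fin (m + 1) =>
          (1 / ((2 * (k : ℕ))! : ℝ)) * (Matrix.vandermonde fun i => ρ i ^ 2) i k := by
    apply Matrix.ext
    intro i k
    simp only [Matrix.transpose_apply, Matrix.of_apply, Matrix.vandermonde, pow_mul]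
    ring
  rw [← Matrix.det_transpose, h, Matrix.det_mul_row, Matrix.det_vandermonde]

lemma pairs_prod {n : ℕ} (f : Fin n → Fin n → ℝ) :
    ∏ p ∈ Finset.univ.filter (fun p : Fin n × Fin n => p.1 < p.2), f p.1 p.2
      = ∏ i, ∏ j ∈ Finset.Ioi i, f i j := by
  rw [Finset.prod_sigma' Finset.univ (fun i => Finset.Ioi i) (fun i j => f i j)]
  refine Finset.prod_nbij' (fun p => ⟨p.1, p.2⟩) (fun x => (x.1, x.2)) ?_ ?_ ?_ ?_ ?_
  · intro p hp
    rw [Finset.mem_filter] at hp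
    rw [Finset.mem_sigma]
    exact ⟨Finset.mem_univ _, Finset.mem_Ioi.2 hp.2⟩
  · intro x hx
    rw [Finset.mem_sigma] at hx
    rw [Finset.mem_filter]
    exact ⟨Finset.mem_univ _, Finset.mem_Ioi.1 hx.2⟩
  · intro x hx
    rfl
  · intro p hp
    rfl
  · intro x hx
    rfl

/-- for `ρ = (1/2, 3/2, …, (2n-1)/2)` and any `μ ∈ ℝⁿ` with
`μ₁² < μ₂² < ⋯ < μₙ²`, the ratio of alternating signed-Weyl sums satisfies
`lim_{t→0} [Σ_w sgn₀(w) e^{t⟨w(μ),ρ⟩}] / [Σ_w sgn₀(w) e^{t⟨w(ρ),ρ⟩}]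
  = ∏_{1≤l<m≤n} (μ_m² - μ_l²)/(ρ_m² - ρ_l²)`. -/
theorem signed_weyl_sum_ratio_limit (n : ℕ) (hn : 0 < n)
    (ρW : Fin n → ℝ) (hρ : ∀ m, ρW m = (m : ℕ) + 1 / 2)
    (μ : Fin n → ℝ) (hμ : ∀ l m : Fin n, l < m → (μ l) ^ 2 < (μ m) ^ 2) :
    Tendsto (fun t : ℝ => signedWeylSum n ρW μ t / signedWeylSum n ρW ρW t)
      (nhdsWithin 0 {t : ℝ | t ≠ 0})
      (nhds (∏ p ∈ Finset.univ.filter (fun p : Fin n × Fin n => p.1 < p.2),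
        ((μ p.2) ^ 2 - (μ p.1) ^ 2) / ((ρW p.2) ^ 2 - (ρW p.1) ^ 2))) := by
  obtain ⟨m, rfl⟩ : ∃ m, n = m + 1 := ⟨n - 1, by omega⟩
  have hρ2 : ∀ i j : Fin (m + 1), i < j → ρW i ^ 2 < ρW j ^ 2 := by
    intro i j hij
    have h0 : (0 : ℝ) ≤ ρW i := by rw [hρ]; positivity
    have hlt : ρW i < ρW j := by
      rw [hρ i, hρ j]
      have h1 : ((i : ℕ) : ℝ) < ((j : ℕ) : ℝ) := Nat.cast_lt.2 hij
      linarith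
    nlinarith
  have hΔρ : (0 : ℝ) < ∏ i, ∏ j ∈ Finset.Ioi i, (ρW j ^ 2 - ρW i ^ 2) := by
    apply Finset.prod_pos
    intro i _
    apply Finset.prod_pos
    intro j hj
    have := hρ2 i j (Finset.mem_Ioi.1 hj)
    linarith
  have hCf : (0 : ℝ) < ∏ k : Fin (m + 1), (1 / ((2 * (k : ℕ))! : ℝ)) := by
    apply Finset.prod_pos
    intro k _
    exact one_div_pos.2 (fact_pos_cast _)
  have hGρ0 : Gfun m ρW ρW 0 ≠ 0 := by
    rw [Gfun_zero, detA_eq, detW_eq]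
    exact ne_of_gt (mul_pos hΔρ (mul_pos hCf hΔρ))
  have hsw : ∀ (ν : Fin (m + 1) → ℝ) (t : ℝ),
      signedWeylSum (m + 1) ρW ν t
        = 2 ^ (m + 1) * (t ^ ((m + 1) * m) * Gfun m ρW ν t) := by
    intro ν t
    rw [swsum_eq]
    congr 1
    rw [← Fdet_eq, ← Matrix.det_transpose (Matrix.of fun j i => Real.cosh (t * ν j * ρW i))]
    congr 1
  have hkey : Tendsto (fun t => Gfun m ρW μ t / Gfun m ρW ρW t)
      (nhdsWithin 0 {t : ℝ | t ≠ 0})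
      (nhds (Gfun m ρW μ 0 / Gfun m ρW ρW 0)) :=
    (((Gfun_continuousAt m ρW μ).div (Gfun_continuousAt m ρW ρW) hGρ0).tendsto).mono_left
      nhdsWithin_le_nhds
  have hval : Gfun m ρW μ 0 / Gfun m ρW ρW 0
      = ∏ p ∈ Finset.univ.filter (fun p : Fin (m + 1) × Fin (m + 1) => p.1 < p.2),
          ((μ p.2) ^ 2 - (μ p.1) ^ 2) / ((ρW p.2) ^ 2 - (ρW p.1) ^ 2) := by
    rw [Gfun_zero, Gfun_zero, detA_eq, detA_eq, detW_eq,
      mul_div_mul_right _ _ (ne_of_gt (mul_pos hCf hΔρ))]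
    rw [pairs_prod (fun i j => ((μ j) ^ 2 - (μ i) ^ 2) / ((ρW j) ^ 2 - (ρW i) ^ 2))]
    rw [Finset.prod_congr rfl
      (fun i (_ : i ∈ (Finset.univ : Finset (Fin (m + 1)))) => Finset.prod_div_distrib _ _),
      Finset.prod_div_distrib]
  rw [hval] at hkey
  apply tendsto_nhdsWithin_congr _ hkey
  intro t ht
  have htne : t ≠ 0 := ht
  rw [hsw μ t, hsw ρW t, ← mul_assoc, ← mul_assoc,
    mul_div_mul_left _ _ (by positivity : (2 : ℝ) ^ (m + 1) * t ^ ((m + 1) * m) ≠ 0)]
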